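/- Let N ≥ 2, 1 ≤ b ≤ N, and let ψ : Fin N → ℝ^d be a family of vectors. Set H = (1/N)·Σ_{i} ψ_i ψ_iᵀ, and for a b-element subset B of Fin N set H(B) = (1/b)·Σ_{i∈B} ψ_i ψ_iᵀ. Let (Δw, v) be a square-integrable random vector in ℝ^d × ℝ^d and let B be a uniformly distributed random b-element subset of Fin N, independent of (Δw, v). Given α, β ∈ ℝ, define Δw' = (I − αH(B))Δw + βv and v' = −αH(B)Δw + βv, and the second moments C = E[Δw Δwᵀ], J = E[Δw vᵀ], V = E[v vᵀ], and likewise C', J', V' for (Δw', v'). Then the block matrix [[C', J'], [J'ᵀ, V']] equals A·[[C, J], [Jᵀ, V]]·Aᵀ + γα²·[[Σ(C), Σ(C)], [Σ(C), Σ(C)]], where A is the block matrix [[I − αH, βI], [−αH, βI]], γ = (N − b)/((N − 1)·b), and Σ(C) = (1/N)·Σ_i (ψ_iᵀ C ψ_i)·ψ_i ψ_iᵀ − H C H. -/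

import Mathlib

open MeasureTheory Matrix Finset

section Aux
variable {Ω : Type*} [MeasurableSpace Ω] {μ : Measure Ω}

lemma int_mul_of_L2 {f g : Ω → ℝ} (hf : MemLp f 2 μ) (hg : MemLp g 2 μ) :
    Integrable (fun ω => f ω * g ω) μ := by
  have h : Integrable (fun ω => (1/2 : ℝ) * (f ω ^ 2 + g ω ^ 2)) μ :=
    (hf.integrable_sq.add hg.integrable_sq).const_mul _
  refine h.mono' (hf.aestronglyMeasurable.mul hg.aestronglyMeasurable) ?_
  filter_upwards with ω
  rw [Real.norm_eq_abs, abs_mul]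
  nlinarith [sq_nonneg (|f ω| - |g ω|), sq_abs (f ω), sq_abs (g ω), abs_nonneg (f ω), abs_nonneg (g ω)]

end Aux

section Count
variable {X : Type*} [Fintype X] [DecidableEq X]

/-- count of b-subsets of univ containing a given subset s -/
lemma count_supersets (b : ℕ) (s : Finset X) (hsb : s.card ≤ b) :
    ((Finset.univ.powersetCard b).filter (fun B => s ⊆ B)).card
      = (Fintype.card X - s.card).choose (b - s.card) := by
  rw [← Finset.card_compl s, ← Finset.card_powersetCard]
  apply Finset.card_bij (fun B _ => B \ s)
  · intro B hB
    simp only [Finset.mem_filter, Finset.mem_powersetCard] at hB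
    simp only [Finset.mem_powersetCard]
    exact ⟨fun x hx => by simp_all [Finset.mem_sdiff, Finset.mem_compl],
      by rw [Finset.card_sdiff_of_subset hB.2, hB.1.2]⟩
  · intro B hB B' hB' h
    simp only [Finset.mem_filter, Finset.mem_powersetCard] at hB hB'
    have : B \ s ∪ s = B' \ s ∪ s := by rw [h]
    rwa [Finset.sdiff_union_of_subset hB.2, Finset.sdiff_union_of_subset hB'.2] at this
  · intro C hC
    simp only [Finset.mem_powersetCard] at hC
    have hdisj : Disjoint C s := by
      refine Finset.disjoint_left.2 fun x hx hxs => ?_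
      have := hC.1 hx; simp [Finset.mem_compl] at this; exact this hxs
    refine ⟨C ∪ s, ?_, ?_⟩
    · simp only [Finset.mem_filter, Finset.mem_powersetCard]
      refine ⟨⟨Finset.subset_univ _, ?_⟩, Finset.subset_union_right⟩
      rw [Finset.card_union_of_disjoint hdisj, hC.2]
      omega
    · rw [Finset.union_sdiff_right, Finset.sdiff_eq_self_of_disjoint hdisj]

end Count

section Swap
variable {X Y M : Type*} [DecidableEq X] [Fintype Y] [DecidableEq Y] [AddCommMonoid M]

lemma sum_swap_general (𝒮 : Finset (Finset X)) (T : Finset X → Finset Y) (f : Y → M) :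
    ∑ B ∈ 𝒮, ∑ y ∈ T B, f y
      = ∑ y : Y, ((𝒮.filter (fun B => y ∈ T B)).card) • f y := by
  calc ∑ B ∈ 𝒮, ∑ y ∈ T B, f y = ∑ B ∈ 𝒮, ∑ y : Y, if y ∈ T B then f y else 0 := by
        refine Finset.sum_congr rfl fun B _ => ?_
        rw [Finset.sum_ite_mem, Finset.univ_inter]
    _ = ∑ y : Y, ∑ B ∈ 𝒮, if y ∈ T B then f y else 0 := Finset.sum_comm
    _ = _ := by
        refine Finset.sum_congr rfl fun y _ => ?_
        rw [Finset.sum_ite, Finset.sum_const_zero, add_zero, Finset.sum_const]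

lemma sum_mem_swap [Fintype X] (𝒮 : Finset (Finset X)) (f : X → M) :
    ∑ B ∈ 𝒮, ∑ i ∈ B, f i = ∑ i : X, ((𝒮.filter (fun B => i ∈ B)).card) • f i :=
  sum_swap_general 𝒮 id f

lemma sum_mem_swap2 [Fintype X] (𝒮 : Finset (Finset X)) (g : X → X → M) :
    ∑ B ∈ 𝒮, ∑ i ∈ B, ∑ j ∈ B, g i j
      = ∑ i : X, ∑ j : X, ((𝒮.filter (fun B => i ∈ B ∧ j ∈ B)).card) • g i j := by
  have := sum_swap_general (Y := X × X) 𝒮 (fun B => B ×ˢ B) (fun p => g p.1 p.2)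
  simp only [Finset.mem_product] at this
  calc ∑ B ∈ 𝒮, ∑ i ∈ B, ∑ j ∈ B, g i j
      = ∑ B ∈ 𝒮, ∑ p ∈ B ×ˢ B, g p.1 p.2 := by
        refine Finset.sum_congr rfl fun B _ => (Finset.sum_product' _ _ _).symm
    _ = ∑ p : X × X, ((𝒮.filter (fun B => p.1 ∈ B ∧ p.2 ∈ B)).card) • g p.1 p.2 := this
    _ = _ := by rw [← Finset.sum_product']; rfl

end Swap

section Choose

lemma succ_mul_choose' (n k : ℕ) : (n+1) * n.choose k = (k+1) * (n+1).choose (k+1) := by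
  rw [show n+1 = Nat.succ n from rfl, Nat.add_one_mul_choose_eq]
  simp [Nat.succ_eq_add_one]
  ring

lemma idk1 {N b : ℕ} (hN : 1 ≤ N) (hb : 1 ≤ b) :
    N * (N-1).choose (b-1) = b * N.choose b := by
  obtain ⟨N', rfl⟩ : ∃ N', N = N' + 1 := ⟨N - 1, by omega⟩
  obtain ⟨b', rfl⟩ : ∃ b', b = b' + 1 := ⟨b - 1, by omega⟩
  simpa using succ_mul_choose' N' b'

lemma idk2 {N b : ℕ} (hN : 2 ≤ N) (hb : 2 ≤ b) :
    N * (N-1) * (N-2).choose (b-2) = b * (b-1) * N.choose b := by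
  obtain ⟨N', rfl⟩ : ∃ N', N = N' + 2 := ⟨N - 2, by omega⟩
  obtain ⟨b', rfl⟩ : ∃ b', b = b' + 2 := ⟨b - 2, by omega⟩
  have h1 := succ_mul_choose' N' b'
  have h2 := succ_mul_choose' (N'+1) (b'+1)
  simp only [show N'+2-1 = N'+1 from rfl, show N'+2-2 = N' from rfl,
    show b'+2-1 = b'+1 from rfl, show b'+2-2 = b' from rfl]
  calc (N'+2) * (N'+1) * N'.choose b' = (N'+2) * ((N'+1) * N'.choose b') := by ring
    _ = (N'+2) * ((b'+1) * (N'+1).choose (b'+1)) := by rw [h1]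
    _ = (b'+1) * ((N'+1+1) * (N'+1).choose (b'+1)) := by ring
    _ = (b'+1) * ((b'+1+1) * (N'+1+1).choose (b'+1+1)) := by rw [h2]
    _ = _ := by ring
end Choose

section AvgBatch
variable {X : Type*} [Fintype X] [DecidableEq X]
variable {M' : Type*} [AddCommGroup M'] [Module ℝ M']

lemma avg_sum_batch (b : ℕ) (hb1 : 1 ≤ b) (f : X → M') :
    ∑ B ∈ Finset.univ.powersetCard b, ∑ i ∈ B, f i
      = (((Fintype.card X - 1).choose (b-1) : ℝ)) • ∑ i, f i := by
  rw [sum_mem_swap]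
  have hc : ∀ i : X, (((Finset.univ.powersetCard b).filter (fun B => i ∈ B)).card)
      = (Fintype.card X - 1).choose (b - 1) := by
    intro i
    have := count_supersets (X := X) b {i} (by simpa using hb1)
    simpa [Finset.singleton_subset_iff] using this
  simp_rw [hc, ← Finset.smul_sum]
  rw [← Nat.cast_smul_eq_nsmul ℝ]

lemma avg_sum_batch2 (b : ℕ) (hb1 : 1 ≤ b) (g : X → X → M')
    (k2 : ℕ) (hk2 : k2 = if 2 ≤ b then (Fintype.card X - 2).choose (b-2) else 0) :
    ∑ B ∈ Finset.univ.powersetCard b, ∑ i ∈ B, ∑ j ∈ B, g i j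
      = (k2 : ℝ) • (∑ i, ∑ j, g i j)
        + (((Fintype.card X - 1).choose (b-1) : ℝ) - (k2:ℝ)) • ∑ i, g i i := by
  rw [sum_mem_swap2]
  have hc : ∀ i j : X, (((Finset.univ.powersetCard b).filter (fun B => i ∈ B ∧ j ∈ B)).card)
      = if i = j then (Fintype.card X - 1).choose (b - 1) else k2 := by
    intro i j
    by_cases hij : i = j
    · subst hij
      simp only [if_pos rfl, and_self]
      have := count_supersets (X := X) b {i} (by simpa using hb1)
      simpa [Finset.singleton_subset_iff] using this
    · rw [if_neg hij]
      by_cases hb : 2 ≤ b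
      · rw [hk2, if_pos hb]
        have hcard : ({i, j} : Finset X).card = 2 := by
          rw [Finset.card_insert_of_notMem (by simpa using hij), Finset.card_singleton]
        have h2 := count_supersets (X := X) b {i, j} (by rw [hcard]; exact hb)
        rw [hcard] at h2
        rw [← h2]
        congr 1
        apply Finset.filter_congr
        intro B _
        simp [Finset.insert_subset_iff, Finset.singleton_subset_iff]
      · have hb' : b = 1 := by omega
        subst hb'
        rw [hk2, if_neg hb]
        rw [Finset.card_eq_zero, Finset.filter_eq_empty_iff]
        intro B hB
        rw [Finset.mem_powersetCard] at hB
        intro ⟨hi, hj⟩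
        have : 1 < B.card := Finset.one_lt_card.mpr ⟨i, hi, j, hj, hij⟩
        omega
  simp_rw [hc]
  have step : ∀ i j : X, ((if i = j then (Fintype.card X - 1).choose (b - 1) else k2) : ℕ) • g i j
      = (k2:ℝ) • g i j + (if j = i then (((Fintype.card X - 1).choose (b-1) : ℝ) - (k2:ℝ)) • g i j else 0) := by
    intro i j
    by_cases hij : i = j
    · subst hij
      rw [if_pos rfl, if_pos rfl, ← Nat.cast_smul_eq_nsmul ℝ, ← add_smul]
      congr 1
      ring
    · rw [if_neg hij, if_neg (Ne.symm hij), ← Nat.cast_smul_eq_nsmul ℝ, add_zero]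
  simp_rw [step, Finset.sum_add_distrib, Finset.sum_ite_eq', Finset.mem_univ, if_true]
  congr 1
  · simp_rw [← Finset.smul_sum]
  · rw [← Finset.smul_sum]

end AvgBatch

lemma vvCvv {d : ℕ} (a : Fin d → ℝ) (C : Matrix (Fin d) (Fin d) ℝ) :
    vecMulVec a a * C * vecMulVec a a = (a ⬝ᵥ C.mulVec a) • vecMulVec a a := by
  ext i j
  simp only [Matrix.mul_apply, Matrix.vecMulVec_apply, Matrix.smul_apply, smul_eq_mul,
    dotProduct, Matrix.mulVec, Finset.sum_mul, Finset.mul_sum]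
  rw [Finset.sum_comm]
  refine Finset.sum_congr rfl fun k _ => Finset.sum_congr rfl fun l _ => by ring

lemma int_mul_of_L2' {Ω : Type*} [MeasurableSpace Ω] {μ : Measure Ω} {f g : Ω → ℝ}
    (hf : MemLp f 2 μ) (hg : MemLp g 2 μ) :
    Integrable (fun ω => f ω * g ω) μ := by
  have h : Integrable (fun ω => (1/2 : ℝ) * (f ω ^ 2 + g ω ^ 2)) μ :=
    (hf.integrable_sq.add hg.integrable_sq).const_mul _
  refine h.mono' (hf.aestronglyMeasurable.mul hg.aestronglyMeasurable) ?_
  filter_upwards with ω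
  rw [Real.norm_eq_abs, abs_mul]
  nlinarith [sq_nonneg (|f ω| - |g ω|), sq_abs (f ω), sq_abs (g ω), abs_nonneg (f ω),
    abs_nonneg (g ω)]

lemma integral_step {Ω : Type*} [MeasurableSpace Ω] (μ : Measure Ω) {d : ℕ}
    (w v : Ω → Fin d → ℝ)
    (hw : ∀ i, MemLp (fun ω => w ω i) 2 μ) (hv : ∀ i, MemLp (fun ω => v ω i) 2 μ)
    (β : ℝ) (C J V : Matrix (Fin d) (Fin d) ℝ)
    (hC : C = of fun i j => ∫ ω, w ω i * w ω j ∂μ)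
    (hJ : J = of fun i j => ∫ ω, w ω i * v ω j ∂μ)
    (hV : V = of fun i j => ∫ ω, v ω i * v ω j ∂μ)
    (X Y : Matrix (Fin d) (Fin d) ℝ) (i j : Fin d) :
    ∫ ω, (X.mulVec (w ω) + β • v ω) i * (Y.mulVec (w ω) + β • v ω) j ∂μ
      = (X * C * Yᵀ + β • (X * J) + β • (Jᵀ * Yᵀ) + (β ^ 2) • V) i j := by
  have hww : ∀ k l, Integrable (fun ω => w ω k * w ω l) μ :=
    fun k l => int_mul_of_L2' (hw k) (hw l)
  have hwv : ∀ k l, Integrable (fun ω => w ω k * v ω l) μ :=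
    fun k l => int_mul_of_L2' (hw k) (hv l)
  have hvv : ∀ k l, Integrable (fun ω => v ω k * v ω l) μ :=
    fun k l => int_mul_of_L2' (hv k) (hv l)
  have expand : ∀ ω, (X.mulVec (w ω) + β • v ω) i * (Y.mulVec (w ω) + β • v ω) j
      = (∑ k, ∑ l, (X i k * Y j l) * (w ω k * w ω l))
        + ((∑ k, (X i k * β) * (w ω k * v ω j))
        + ((∑ l, (Y j l * β) * (w ω l * v ω i)) + (β * β) * (v ω i * v ω j))) := by
    intro ω
    simp only [Pi.add_apply, Pi.smul_apply, smul_eq_mul, Matrix.mulVec, dotProduct]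
    trans (∑ k, ∑ l, (X i k * w ω k) * (Y j l * w ω l))
        + ((∑ k, (X i k * w ω k) * (β * v ω j))
        + ((∑ l, (β * v ω i) * (Y j l * w ω l)) + (β * v ω i) * (β * v ω j)))
    · rw [← Finset.sum_mul_sum, ← Finset.sum_mul, ← Finset.mul_sum]; ring
    · congr 1
      · refine Finset.sum_congr rfl fun k _ => Finset.sum_congr rfl fun l _ => ?_; ring
      congr 1
      · refine Finset.sum_congr rfl fun k _ => ?_; ring
      congr 1
      · refine Finset.sum_congr rfl fun l _ => ?_; ring
      · ring
  have I1 : Integrable (fun ω => ∑ k, ∑ l, (X i k * Y j l) * (w ω k * w ω l)) μ :=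
    integrable_finset_sum _ fun k _ => integrable_finset_sum _ fun l _ =>
      (hww k l).const_mul _
  have I2 : Integrable (fun ω => ∑ k, (X i k * β) * (w ω k * v ω j)) μ :=
    integrable_finset_sum _ fun k _ => (hwv k j).const_mul _
  have I3 : Integrable (fun ω => ∑ l, (Y j l * β) * (w ω l * v ω i)) μ :=
    integrable_finset_sum _ fun l _ => (hwv l i).const_mul _
  have I4 : Integrable (fun ω => (β * β) * (v ω i * v ω j)) μ := (hvv i j).const_mul _
  rw [show (fun ω => (X.mulVec (w ω) + β • v ω) i * (Y.mulVec (w ω) + β • v ω) j)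
      = fun ω => (∑ k, ∑ l, (X i k * Y j l) * (w ω k * w ω l))
        + ((∑ k, (X i k * β) * (w ω k * v ω j))
        + ((∑ l, (Y j l * β) * (w ω l * v ω i)) + (β * β) * (v ω i * v ω j)))
      from funext expand]
  have I34 : Integrable (fun ω => (∑ l, (Y j l * β) * (w ω l * v ω i))
      + (β * β) * (v ω i * v ω j)) μ := I3.add I4
  have I234 : Integrable (fun ω => (∑ k, (X i k * β) * (w ω k * v ω j))
      + ((∑ l, (Y j l * β) * (w ω l * v ω i)) + (β * β) * (v ω i * v ω j))) μ := I2.add I34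
  rw [integral_add I1 I234, integral_add I2 I34, integral_add I3 I4]
  have e1 : ∫ ω, ∑ k, ∑ l, (X i k * Y j l) * (w ω k * w ω l) ∂μ
      = ∑ k, ∑ l, (X i k * Y j l) * C k l := by
    rw [integral_finset_sum _ fun k _ => integrable_finset_sum _ fun l _ =>
      (hww k l).const_mul _]
    refine Finset.sum_congr rfl fun k _ => ?_
    rw [integral_finset_sum _ fun l _ => (hww k l).const_mul _]
    refine Finset.sum_congr rfl fun l _ => ?_
    rw [integral_const_mul, hC]; rfl
  have e2 : ∫ ω, ∑ k, (X i k * β) * (w ω k * v ω j) ∂μ = ∑ k, (X i k * β) * J k j := by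
    rw [integral_finset_sum _ fun k _ => (hwv k j).const_mul _]
    refine Finset.sum_congr rfl fun k _ => ?_
    rw [integral_const_mul, hJ]; rfl
  have e3 : ∫ ω, ∑ l, (Y j l * β) * (w ω l * v ω i) ∂μ = ∑ l, (Y j l * β) * J l i := by
    rw [integral_finset_sum _ fun l _ => (hwv l i).const_mul _]
    refine Finset.sum_congr rfl fun l _ => ?_
    rw [integral_const_mul, hJ]; rfl
  have e4 : ∫ ω, (β * β) * (v ω i * v ω j) ∂μ = (β * β) * V i j := by
    rw [integral_const_mul, hV]; rfl
  rw [e1, e2, e3, e4]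
  have t1 : ∑ k : Fin d, ∑ l : Fin d, (X i k * Y j l) * C k l
      = ∑ l : Fin d, (∑ k : Fin d, X i k * C k l) * Y j l := by
    rw [Finset.sum_comm]
    refine Finset.sum_congr rfl fun l _ => ?_
    rw [Finset.sum_mul]
    exact Finset.sum_congr rfl fun k _ => by ring
  have t2 : ∑ k : Fin d, (X i k * β) * J k j = β * ∑ k : Fin d, X i k * J k j := by
    rw [Finset.mul_sum]; exact Finset.sum_congr rfl fun k _ => by ring
  have t3 : ∑ l : Fin d, (Y j l * β) * J l i = β * ∑ l : Fin d, J l i * Y j l := by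
    rw [Finset.mul_sum]; exact Finset.sum_congr rfl fun l _ => by ring
  rw [t1, t2, t3]
  simp only [Matrix.add_apply, Matrix.smul_apply, smul_eq_mul, Matrix.mul_apply,
    Matrix.transpose_apply]
  ring

section Main6
variable {N d b : ℕ}
  (ψ : Fin N → Fin d → ℝ)

lemma avg1 (hN : 2 ≤ N) (hb1 : 1 ≤ b) (hbN : b ≤ N) (H : Matrix (Fin d) (Fin d) ℝ)
    (hH : H = (N : ℝ)⁻¹ • ∑ i : Fin N, vecMulVec (ψ i) (ψ i))
    (HB : Finset (Fin N) → Matrix (Fin d) (Fin d) ℝ)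
    (hHB : ∀ B, HB B = (b : ℝ)⁻¹ • ∑ i ∈ B, vecMulVec (ψ i) (ψ i))
    (𝒮 : Finset (Finset (Fin N))) (h𝒮 : 𝒮 = Finset.univ.powersetCard b) :
    ∑ B ∈ 𝒮, HB B = (𝒮.card : ℝ) • H := by
  subst h𝒮 hH
  have hcard : ((Finset.univ.powersetCard b : Finset (Finset (Fin N))).card : ℝ)
      = (N.choose b : ℝ) := by
    rw [Finset.card_powersetCard, Finset.card_univ, Fintype.card_fin]
  rw [hcard]
  simp_rw [hHB]
  rw [← Finset.smul_sum, avg_sum_batch b hb1, Fintype.card_fin, smul_smul, smul_smul]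
  congr 1
  have ck1 : (N:ℝ) * ((N-1).choose (b-1) : ℝ) = (b:ℝ) * (N.choose b : ℝ) := by
    exact_mod_cast congrArg (Nat.cast (R := ℝ)) (idk1 (by omega) hb1)
  have hb0 : (b:ℝ) ≠ 0 := Nat.cast_ne_zero.mpr (by omega)
  have hN0 : (N:ℝ) ≠ 0 := Nat.cast_ne_zero.mpr (by omega)
  field_simp
  linear_combination ck1

lemma avg2 (hN : 2 ≤ N) (hb1 : 1 ≤ b) (hbN : b ≤ N) (H : Matrix (Fin d) (Fin d) ℝ)
    (hH : H = (N : ℝ)⁻¹ • ∑ i : Fin N, vecMulVec (ψ i) (ψ i))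
    (HB : Finset (Fin N) → Matrix (Fin d) (Fin d) ℝ)
    (hHB : ∀ B, HB B = (b : ℝ)⁻¹ • ∑ i ∈ B, vecMulVec (ψ i) (ψ i))
    (𝒮 : Finset (Finset (Fin N))) (h𝒮 : 𝒮 = Finset.univ.powersetCard b)
    (C : Matrix (Fin d) (Fin d) ℝ)
    (γ : ℝ) (hγ : γ = ((N : ℝ) - b) / (((N : ℝ) - 1) * b))
    (Snoise : Matrix (Fin d) (Fin d) ℝ)
    (hSnoise : Snoise = (N : ℝ)⁻¹ •
        ∑ i : Fin N, (ψ i ⬝ᵥ C.mulVec (ψ i)) • vecMulVec (ψ i) (ψ i) - H * C * H) :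
    ∑ B ∈ 𝒮, HB B * C * HB B = (𝒮.card : ℝ) • (H * C * H + γ • Snoise) := by
  subst h𝒮 hγ hSnoise hH
  set SM := ∑ i : Fin N, vecMulVec (ψ i) (ψ i) with hSM
  set T := ∑ i : Fin N, (ψ i ⬝ᵥ C.mulVec (ψ i)) • vecMulVec (ψ i) (ψ i) with hT
  set k2 : ℕ := if 2 ≤ b then (N - 2).choose (b-2) else 0 with hk2
  have hcard : ((Finset.univ.powersetCard b : Finset (Finset (Fin N))).card : ℝ)
      = (N.choose b : ℝ) := by
    rw [Finset.card_powersetCard, Finset.card_univ, Fintype.card_fin]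
  rw [hcard]
  have perB : ∀ B : Finset (Fin N), HB B * C * HB B
      = (b:ℝ)⁻¹ • ((b:ℝ)⁻¹ • ∑ i ∈ B, ∑ j ∈ B,
          vecMulVec (ψ i) (ψ i) * C * vecMulVec (ψ j) (ψ j)) := by
    intro B
    rw [hHB]
    simp only [smul_mul_assoc, mul_smul_comm, Finset.sum_mul, Finset.mul_sum,
      ← Finset.smul_sum]
    exact congrArg _ (congrArg _ Finset.sum_comm)
  simp_rw [perB]
  rw [← Finset.smul_sum, ← Finset.smul_sum]
  rw [avg_sum_batch2 b hb1 _ k2 (by rw [hk2, Fintype.card_fin]), Fintype.card_fin]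
  have hTT : ∑ i : Fin N, vecMulVec (ψ i) (ψ i) * C * vecMulVec (ψ i) (ψ i) = T := by
    rw [hT]; exact Finset.sum_congr rfl fun i _ => vvCvv _ _
  have hSS : ∑ i : Fin N, ∑ j : Fin N,
      vecMulVec (ψ i) (ψ i) * C * vecMulVec (ψ j) (ψ j) = SM * C * SM := by
    rw [hSM, Finset.sum_mul, Finset.sum_mul]
    refine Finset.sum_congr rfl fun i _ => ?_
    rw [Finset.mul_sum]
  rw [hTT, hSS]
  -- scalar identities
  have hb0 : (b:ℝ) ≠ 0 := Nat.cast_ne_zero.mpr (by omega)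
  have hN0 : (N:ℝ) ≠ 0 := Nat.cast_ne_zero.mpr (by omega)
  have hN1 : (N:ℝ) - 1 ≠ 0 := by
    have : (2:ℝ) ≤ (N:ℝ) := by exact_mod_cast hN
    intro h; nlinarith
  have ck1 : (N:ℝ) * ((N-1).choose (b-1) : ℝ) = (b:ℝ) * (N.choose b : ℝ) := by
    exact_mod_cast congrArg (Nat.cast (R := ℝ)) (idk1 (by omega) hb1)
  have ck2 : (N:ℝ) * ((N:ℝ) - 1) * (k2 : ℝ) = (b:ℝ) * ((b:ℝ) - 1) * (N.choose b : ℝ) := by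
    by_cases hb : 2 ≤ b
    · rw [hk2, if_pos hb]
      have h := idk2 hN hb
      have h' := congrArg (Nat.cast (R := ℝ)) h
      rw [Nat.cast_mul, Nat.cast_mul, Nat.cast_mul, Nat.cast_mul,
        Nat.cast_sub (by omega : 1 ≤ N), Nat.cast_sub (by omega : 1 ≤ b)] at h'
      simpa using h'
    · have hb' : b = 1 := by omega
      subst hb'
      rw [hk2, if_neg hb]
      norm_num
  simp only [smul_mul_assoc, mul_smul_comm, smul_smul, smul_add, smul_sub]
  match_scalars
  · field_simp
    linear_combination (N:ℝ) * ck2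
  · field_simp
    linear_combination ((N:ℝ)-1) * ck1 - ck2
end Main6

section Main7
variable {N d b : ℕ} (ψ : Fin N → Fin d → ℝ)
lemma keylemma (hN : 2 ≤ N) (hb1 : 1 ≤ b) (hbN : b ≤ N) (H : Matrix (Fin d) (Fin d) ℝ)
    (hH : H = (N : ℝ)⁻¹ • ∑ i : Fin N, vecMulVec (ψ i) (ψ i))
    (HB : Finset (Fin N) → Matrix (Fin d) (Fin d) ℝ)
    (hHB : ∀ B, HB B = (b : ℝ)⁻¹ • ∑ i ∈ B, vecMulVec (ψ i) (ψ i))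
    (𝒮 : Finset (Finset (Fin N))) (h𝒮 : 𝒮 = Finset.univ.powersetCard b)
    (C : Matrix (Fin d) (Fin d) ℝ)
    (γ : ℝ) (hγ : γ = ((N : ℝ) - b) / (((N : ℝ) - 1) * b))
    (Snoise : Matrix (Fin d) (Fin d) ℝ)
    (hSnoise : Snoise = (N : ℝ)⁻¹ •
        ∑ i : Fin N, (ψ i ⬝ᵥ C.mulVec (ψ i)) • vecMulVec (ψ i) (ψ i) - H * C * H)
    (β x y : ℝ) (J V : Matrix (Fin d) (Fin d) ℝ)
    (X0 Y0 : Matrix (Fin d) (Fin d) ℝ) (hY0 : Y0ᵀ = Y0) :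
    (𝒮.card : ℝ)⁻¹ • ∑ B ∈ 𝒮, ((X0 + x • HB B) * C * (Y0 + y • HB B)ᵀ
        + β • ((X0 + x • HB B) * J) + β • (Jᵀ * (Y0 + y • HB B)ᵀ) + β ^ 2 • V)
    = (X0 + x • H) * C * (Y0 + y • H) + β • ((X0 + x • H) * J)
        + β • (Jᵀ * (Y0 + y • H)) + β ^ 2 • V + (x * y * γ) • Snoise := by
  have hMsym : ∀ a : Fin d → ℝ, (vecMulVec a a)ᵀ = vecMulVec a a := by
    intro a; ext i j; simp [Matrix.vecMulVec_apply, Matrix.transpose_apply, mul_comm]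
  have hHBs : ∀ B, (HB B)ᵀ = HB B := by
    intro B; rw [hHB]; rw [Matrix.transpose_smul, Matrix.transpose_sum]
    simp_rw [hMsym]
  have hS0 : ((𝒮.card : ℝ)) ≠ 0 := by
    rw [h𝒮, Finset.card_powersetCard, Finset.card_univ, Fintype.card_fin]
    exact_mod_cast (Nat.choose_pos hbN).ne'
  have expand : ∀ B ∈ 𝒮, ((X0 + x • HB B) * C * (Y0 + y • HB B)ᵀ
        + β • ((X0 + x • HB B) * J) + β • (Jᵀ * (Y0 + y • HB B)ᵀ) + β ^ 2 • V)
      = (X0 * C * Y0 + β • (X0 * J) + β • (Jᵀ * Y0) + β ^ 2 • V)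
        + (x • (HB B * C * Y0) + (y • (X0 * C * HB B) + ((x*y) • (HB B * C * HB B)
          + ((β*x) • (HB B * J) + (β*y) • (Jᵀ * HB B))))) := by
    intro B _
    rw [Matrix.transpose_add, Matrix.transpose_smul, hHBs, hY0]
    simp only [Matrix.add_mul, Matrix.mul_add, smul_mul_assoc, mul_smul_comm, smul_smul,
      smul_add]
    module
  rw [Finset.sum_congr rfl expand]
  simp only [Finset.sum_add_distrib, ← Finset.smul_sum, ← Finset.sum_mul, ← Finset.mul_sum,
    Finset.sum_const]
  rw [← Nat.cast_smul_eq_nsmul ℝ]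
  rw [avg1 ψ hN hb1 hbN H hH HB hHB 𝒮 h𝒮,
    avg2 ψ hN hb1 hbN H hH HB hHB 𝒮 h𝒮 C γ hγ Snoise hSnoise]
  simp only [smul_add, smul_smul, smul_mul_assoc, mul_smul_comm,
    Matrix.add_mul, Matrix.mul_add]
  match_scalars <;> field_simp <;> ring
end Main7
/-- One step of mini-batch SGD with momentum on a quadratic problem: evolution of
the second moments `C = E[Δw Δwᵀ]`, `J = E[Δw vᵀ]`, `V = E[v vᵀ]`. The batch `B`
is uniformly distributed over all `b`-element subsets of `Fin N`, independently of
`(Δw, v)`; this is modeled by averaging over all such subsets. -/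
theorem sgd_second_moment_update
    {Ω : Type*} [MeasurableSpace Ω] (μ : Measure Ω) [IsProbabilityMeasure μ]
    (N d b : ℕ) (hN : 2 ≤ N) (hb1 : 1 ≤ b) (hbN : b ≤ N)
    (ψ : Fin N → Fin d → ℝ)
    (w v : Ω → Fin d → ℝ)
    (hw : ∀ i, MemLp (fun ω => w ω i) 2 μ)
    (hv : ∀ i, MemLp (fun ω => v ω i) 2 μ)
    (α β : ℝ)
    -- the full Hessian and the batch Hessians
    (H : Matrix (Fin d) (Fin d) ℝ)
    (hH : H = (N : ℝ)⁻¹ • ∑ i : Fin N, vecMulVec (ψ i) (ψ i))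
    (HB : Finset (Fin N) → Matrix (Fin d) (Fin d) ℝ)
    (hHB : ∀ B, HB B = (b : ℝ)⁻¹ • ∑ i ∈ B, vecMulVec (ψ i) (ψ i))
    -- the updated parameter deviation and momentum, as functions of the batch
    (w' v' : Finset (Fin N) → Ω → Fin d → ℝ)
    (hw' : ∀ B ω, w' B ω = (1 - α • HB B).mulVec (w ω) + β • v ω)
    (hv' : ∀ B ω, v' B ω = -((α • HB B).mulVec (w ω)) + β • v ω)
    -- second moments before the step
    (C J V : Matrix (Fin d) (Fin d) ℝ)
    (hC : C = of fun i j => ∫ ω, w ω i * w ω j ∂μ)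
    (hJ : J = of fun i j => ∫ ω, w ω i * v ω j ∂μ)
    (hV : V = of fun i j => ∫ ω, v ω i * v ω j ∂μ)
    -- the family of all b-element batches; expectation over B is the uniform average
    (𝒮 : Finset (Finset (Fin N)))
    (h𝒮 : 𝒮 = Finset.univ.powersetCard b)
    -- second moments after the step
    (C' J' V' : Matrix (Fin d) (Fin d) ℝ)
    (hC' : C' = of fun i j => (𝒮.card : ℝ)⁻¹ * ∑ B ∈ 𝒮, ∫ ω, w' B ω i * w' B ω j ∂μ)
    (hJ' : J' = of fun i j => (𝒮.card : ℝ)⁻¹ * ∑ B ∈ 𝒮, ∫ ω, w' B ω i * v' B ω j ∂μ)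
    (hV' : V' = of fun i j => (𝒮.card : ℝ)⁻¹ * ∑ B ∈ 𝒮, ∫ ω, v' B ω i * v' B ω j ∂μ)
    -- noise amplitude and noise covariance
    (γ : ℝ) (hγ : γ = ((N : ℝ) - b) / (((N : ℝ) - 1) * b))
    (Snoise : Matrix (Fin d) (Fin d) ℝ)
    (hSnoise : Snoise = (N : ℝ)⁻¹ •
        ∑ i : Fin N, (ψ i ⬝ᵥ C.mulVec (ψ i)) • vecMulVec (ψ i) (ψ i) - H * C * H)
    -- the deterministic one-step evolution matrix
    (A : Matrix (Fin d ⊕ Fin d) (Fin d ⊕ Fin d) ℝ)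
    (hA : A = fromBlocks (1 - α • H) (β • 1) (-(α • H)) (β • 1)) :
    fromBlocks C' J' J'ᵀ V'
      = A * fromBlocks C J Jᵀ V * Aᵀ + (γ * α ^ 2) • fromBlocks Snoise Snoise Snoise Snoise := by
  -- symmetry facts
  have hMsym : ∀ a : Fin d → ℝ, (vecMulVec a a)ᵀ = vecMulVec a a := by
    intro a; ext i j; simp [Matrix.vecMulVec_apply, Matrix.transpose_apply, mul_comm]
  have hHs : Hᵀ = H := by
    rw [hH, Matrix.transpose_smul, Matrix.transpose_sum]
    simp_rw [hMsym]
  have hCs : Cᵀ = C := by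
    rw [hC]; ext i j
    simp only [Matrix.transpose_apply, Matrix.of_apply]
    rw [show (fun ω => w ω j * w ω i) = fun ω => w ω i * w ω j from
      funext fun ω => mul_comm _ _]
  have hVs : Vᵀ = V := by
    rw [hV]; ext i j
    simp only [Matrix.transpose_apply, Matrix.of_apply]
    rw [show (fun ω => v ω j * v ω i) = fun ω => v ω i * v ω j from
      funext fun ω => mul_comm _ _]
  have hSns : Snoiseᵀ = Snoise := by
    rw [hSnoise]
    simp only [Matrix.transpose_sub, Matrix.transpose_smul, Matrix.transpose_sum,
      Matrix.transpose_mul, hHs, hCs]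
    simp_rw [hMsym]
    rw [Matrix.mul_assoc]
  -- the integral-averaging reduction
  have hmat : ∀ (f g : Finset (Fin N) → Ω → Fin d → ℝ)
      (X0 Y0 : Matrix (Fin d) (Fin d) ℝ) (x y : ℝ),
      (∀ B ω, f B ω = (X0 + x • HB B).mulVec (w ω) + β • v ω) →
      (∀ B ω, g B ω = (Y0 + y • HB B).mulVec (w ω) + β • v ω) →
      (of fun i j => (𝒮.card : ℝ)⁻¹ * ∑ B ∈ 𝒮, ∫ ω, f B ω i * g B ω j ∂μ)
        = (𝒮.card : ℝ)⁻¹ • ∑ B ∈ 𝒮, ((X0 + x • HB B) * C * (Y0 + y • HB B)ᵀ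
            + β • ((X0 + x • HB B) * J) + β • (Jᵀ * (Y0 + y • HB B)ᵀ) + β ^ 2 • V) := by
    intro f g X0 Y0 x y hf hg
    ext i j
    simp only [Matrix.of_apply, Matrix.smul_apply, Matrix.sum_apply, smul_eq_mul]
    congr 1
    refine Finset.sum_congr rfl fun B _ => ?_
    rw [show (fun ω => f B ω i * g B ω j) = fun ω =>
        ((X0 + x • HB B).mulVec (w ω) + β • v ω) i *
          ((Y0 + y • HB B).mulVec (w ω) + β • v ω) j
      from funext fun ω => by rw [hf B ω, hg B ω]]
    exact integral_step μ w v hw hv β C J V hC hJ hV _ _ i j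
  have key := keylemma ψ hN hb1 hbN H hH HB hHB 𝒮 h𝒮 C γ hγ Snoise hSnoise β
  have hw2 : ∀ B ω, w' B ω = ((1 : Matrix (Fin d) (Fin d) ℝ)
      + (-α) • HB B).mulVec (w ω) + β • v ω := by
    intro B ω
    rw [hw' B ω, show (1 : Matrix (Fin d) (Fin d) ℝ) - α • HB B = 1 + (-α) • HB B by
      rw [neg_smul, ← sub_eq_add_neg]]
  have hv2 : ∀ B ω, v' B ω = ((0 : Matrix (Fin d) (Fin d) ℝ)
      + (-α) • HB B).mulVec (w ω) + β • v ω := by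
    intro B ω
    rw [hv' B ω, zero_add, neg_smul, Matrix.neg_mulVec]
  have hC2 : C' = (1 + (-α) • H) * C * (1 + (-α) • H) + β • ((1 + (-α) • H) * J)
      + β • (Jᵀ * (1 + (-α) • H)) + β ^ 2 • V + ((-α) * (-α) * γ) • Snoise := by
    rw [hC', hmat w' w' 1 1 (-α) (-α) hw2 hw2, key (-α) (-α) J V 1 1 Matrix.transpose_one]
  have hJ2 : J' = (1 + (-α) • H) * C * (0 + (-α) • H) + β • ((1 + (-α) • H) * J)
      + β • (Jᵀ * (0 + (-α) • H)) + β ^ 2 • V + ((-α) * (-α) * γ) • Snoise := by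
    rw [hJ', hmat w' v' 1 0 (-α) (-α) hw2 hv2, key (-α) (-α) J V 1 0 Matrix.transpose_zero]
  have hV2 : V' = (0 + (-α) • H) * C * (0 + (-α) • H) + β • ((0 + (-α) • H) * J)
      + β • (Jᵀ * (0 + (-α) • H)) + β ^ 2 • V + ((-α) * (-α) * γ) • Snoise := by
    rw [hV', hmat v' v' 0 0 (-α) (-α) hv2 hv2, key (-α) (-α) J V 0 0 Matrix.transpose_zero]
  have hJt : J'ᵀ = (0 + (-α) • H) * C * (1 + (-α) • H) + β • ((0 + (-α) • H) * J)
      + β • (Jᵀ * (1 + (-α) • H)) + β ^ 2 • V + ((-α) * (-α) * γ) • Snoise := by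
    rw [hJ2]
    simp only [Matrix.transpose_add, Matrix.transpose_smul, Matrix.transpose_mul,
      Matrix.transpose_one, Matrix.transpose_zero, Matrix.transpose_transpose,
      hHs, hCs, hVs, hSns]
    simp only [Matrix.add_mul, Matrix.mul_add, smul_mul_assoc, mul_smul_comm, smul_smul,
      smul_add, Matrix.mul_assoc, Matrix.one_mul, Matrix.mul_one, Matrix.zero_mul,
      Matrix.mul_zero, add_zero, zero_add, smul_zero]
    module
  rw [hA, Matrix.fromBlocks_transpose, Matrix.fromBlocks_multiply,
    Matrix.fromBlocks_multiply, Matrix.fromBlocks_smul, Matrix.fromBlocks_add]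
  refine Matrix.fromBlocks_inj.mpr ⟨?_, ?_, ?_, ?_⟩
  · rw [hC2]
    simp only [Matrix.transpose_sub, Matrix.transpose_smul, Matrix.transpose_one, hHs]
    simp only [Matrix.add_mul, Matrix.mul_add, Matrix.sub_mul, Matrix.mul_sub,
      smul_mul_assoc, mul_smul_comm, smul_smul, smul_add, smul_sub, Matrix.mul_assoc,
      Matrix.one_mul, Matrix.mul_one, Matrix.neg_mul, Matrix.mul_neg, neg_smul, smul_neg]
    module
  · rw [hJ2]
    simp only [Matrix.transpose_sub, Matrix.transpose_smul, Matrix.transpose_one,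
      Matrix.transpose_neg, hHs]
    simp only [Matrix.add_mul, Matrix.mul_add, Matrix.sub_mul, Matrix.mul_sub,
      smul_mul_assoc, mul_smul_comm, smul_smul, smul_add, smul_sub, Matrix.mul_assoc,
      Matrix.one_mul, Matrix.mul_one, Matrix.neg_mul, Matrix.mul_neg, neg_smul, smul_neg,
      Matrix.zero_mul, Matrix.mul_zero, zero_add, add_zero]
    module
  · rw [hJt]
    simp only [Matrix.transpose_sub, Matrix.transpose_smul, Matrix.transpose_one,
      Matrix.transpose_neg, hHs]
    simp only [Matrix.add_mul, Matrix.mul_add, Matrix.sub_mul, Matrix.mul_sub,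
      smul_mul_assoc, mul_smul_comm, smul_smul, smul_add, smul_sub, Matrix.mul_assoc,
      Matrix.one_mul, Matrix.mul_one, Matrix.neg_mul, Matrix.mul_neg, neg_smul, smul_neg,
      Matrix.zero_mul, Matrix.mul_zero, zero_add, add_zero]
    module
  · rw [hV2]
    simp only [Matrix.transpose_sub, Matrix.transpose_smul, Matrix.transpose_one,
      Matrix.transpose_neg, hHs]
    simp only [Matrix.add_mul, Matrix.mul_add, Matrix.sub_mul, Matrix.mul_sub,
      smul_mul_assoc, mul_smul_comm, smul_smul, smul_add, smul_sub, Matrix.mul_assoc,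
      Matrix.one_mul, Matrix.mul_one, Matrix.neg_mul, Matrix.mul_neg, neg_smul, smul_neg,
      Matrix.zero_mul, Matrix.mul_zero, zero_add, add_zero]
    module
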